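/- Let (a_n)_{n≥1} satisfy 0 < α ≤ a_n ≤ M, and for each n let f_n : ℝ → ℝ be C¹ with |f_n'(t)| ≤ β̂_n(1 + |t|) for all t ∈ ℝ, where (β̂_n) ∈ s. Fix k ∈ ℕ and R > 0. Then there exists a constant C'_k > 0, depending only on k, (β̂_n) and R, such that for every x = (x_n) ∈ s with Σ_{n=1}^∞ x_n² ≤ R, setting g_n := a_n x_n + f_n'(x_n), one has (α/2) Σ_{n=1}^∞ x_n² n^{2k} ≤ (1/(2α)) Σ_{n=1}^∞ g_n² n^{2k} + C'_k. -/

import Mathlib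

/-- The space `s` of rapidly decreasing sequences (indexed so that `x n` represents the
`(n+1)`-st term of the paper's sequence `(x_n)_{n ≥ 1}`). -/
def InS (x : ℕ → ℝ) : Prop :=
  ∀ k : ℕ, ∃ C : ℝ, ∀ n : ℕ, |x n| * ((n : ℝ) + 1) ^ k ≤ C

theorem sum_inv_sq : Summable (fun n : ℕ => (1:ℝ)/((n:ℝ)+1)^2) := by
  have h := Real.summable_one_div_nat_pow.mpr (le_refl 2)
  have h2 := (summable_nat_add_iff 1).mpr h
  exact h2.congr (by intro n; push_cast; ring)

theorem decay_bound (y : ℕ → ℝ) (m : ℕ) (D : ℝ) (n : ℕ)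
    (h : |y n| * ((n : ℝ) + 1) ^ (m + 1) ≤ D) :
    y n ^ 2 * ((n : ℝ) + 1) ^ (2 * m) ≤ D ^ 2 * ((1:ℝ)/((n:ℝ)+1)^2) := by
  have hp : (0:ℝ) < ((n:ℝ)+1)^2 := by positivity
  rw [mul_one_div, le_div_iff₀ hp]
  have heq : y n ^ 2 * ((n:ℝ)+1)^(2*m) * ((n:ℝ)+1)^2 = (|y n| * ((n:ℝ)+1)^(m+1))^2 := by
    rw [mul_pow, sq_abs, ← pow_mul]
    ring
  rw [heq]
  exact pow_le_pow_left₀ (by positivity) h 2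

theorem decay_summable (y : ℕ → ℝ) (m : ℕ) (D : ℝ)
    (h : ∀ n : ℕ, |y n| * ((n : ℝ) + 1) ^ (m + 1) ≤ D) :
    Summable (fun n : ℕ => y n ^ 2 * ((n : ℝ) + 1) ^ (2 * m)) := by
  have h1 : ∀ n : ℕ, 0 ≤ y n ^ 2 * ((n : ℝ) + 1) ^ (2 * m) := fun n => by positivity
  exact Summable.of_nonneg_of_le h1 (fun n => decay_bound y m D n (h n))
    (sum_inv_sq.mul_left _)

theorem core_ineq (α a x d β : ℝ) (hα : 0 < α) (haα : α ≤ a) (hβ : 0 ≤ β)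
    (habs : |d| ≤ β * (1 + |x|)) :
    α/2 * x^2 ≤ 1/(2*α) * (a*x+d)^2 + β*(|x| + x^2) := by
  have h2α : (0:ℝ) < 2*α := by linarith
  have h4 : |x| * |d| ≤ |x| * (β*(1+|x|)) := by
    gcongr
  have h5 : -(x*d) ≤ |x| * |d| := by rw [← abs_mul]; exact neg_le_abs (x*d)
  have h6 : |x| * |x| = x^2 := by rw [abs_mul_abs_self]; ring
  have h7 : -(x*d) ≤ β*(|x| + x^2) := by
    have heq : |x| * (β*(1+|x|)) = β*(|x| + x^2) := by rw [← h6]; ring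
    linarith [h5.trans (h4.trans_eq heq)]
  have P : α^2 * x^2 ≤ (a*x+d)^2 + 2*α*(β*(|x|+x^2)) := by
    nlinarith [sq_nonneg (a*x+d - α*x), h7, hα,
      mul_nonneg (mul_nonneg hα.le (sub_nonneg.2 haα)) (sq_nonneg x)]
  have heq : α/2 * x^2 = (α^2 * x^2)/(2*α) := by field_simp
  rw [heq, div_le_iff₀ h2α]
  have heq2 : (1/(2*α) * (a*x+d)^2 + β*(|x|+x^2))*(2*α) = (a*x+d)^2 + 2*α*(β*(|x|+x^2)) := by
    field_simp
  rw [heq2]; exact P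

/-- with `0 < α ≤ a_n ≤ M`, `f_n` C¹ with `|f_n'(t)| ≤ β̂_n (1 + |t|)`,
`(β̂_n) ∈ s`, and fixed `k ∈ ℕ`, `R > 0`, there is a constant `C'_k > 0` such that for
every `x ∈ s` with `Σ x_n² ≤ R`, putting `g_n := a_n x_n + f_n'(x_n)`,
`(α/2) Σ x_n² n^{2k} ≤ (1/(2α)) Σ g_n² n^{2k} + C'_k`. -/
theorem stmt_8 (a βh : ℕ → ℝ) (α M : ℝ) (f : ℕ → ℝ → ℝ)
    (hα : 0 < α) (ha : ∀ n, α ≤ a n ∧ a n ≤ M)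
    (hC1 : ∀ n, ContDiff ℝ 1 (f n))
    (hderiv : ∀ n t, |deriv (f n) t| ≤ βh n * (1 + |t|)) (hβh : InS βh)
    (k : ℕ) (R : ℝ) (hR : 0 < R) :
    ∃ C' : ℝ, 0 < C' ∧ ∀ x : ℕ → ℝ, InS x → (∑' n : ℕ, x n ^ 2) ≤ R →
      (α / 2) * ∑' n : ℕ, x n ^ 2 * ((n : ℝ) + 1) ^ (2 * k) ≤
        (1 / (2 * α)) * ∑' n : ℕ, (a n * x n + deriv (f n) (x n)) ^ 2 *
          ((n : ℝ) + 1) ^ (2 * k) + C' := by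
  have hβ0 : ∀ n, 0 ≤ βh n := fun n => by
    have h := hderiv n 0
    simp only [abs_zero, add_zero, mul_one] at h
    exact (abs_nonneg _).trans h
  obtain ⟨B, hB⟩ := hβh (2 * k + 2)
  have hB0 : 0 ≤ B := le_trans (by positivity) (hB 0)
  obtain ⟨B1, hB1⟩ := hβh (k + 1)
  have hM0 : 0 ≤ M := hα.le.trans ((ha 0).1.trans (ha 0).2)
  have hsR0 : 0 ≤ Real.sqrt R := Real.sqrt_nonneg R
  set T : ℝ := ∑' n : ℕ, (1:ℝ)/((n:ℝ)+1)^2 with hTdef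
  have hT0 : 0 ≤ T := tsum_nonneg (fun n => by positivity)
  have hKnn : 0 ≤ B * (Real.sqrt R + R) * T :=
    mul_nonneg (mul_nonneg hB0 (by linarith)) hT0
  refine ⟨B * (Real.sqrt R + R) * T + 1, by linarith, ?_⟩
  intro x hx hxR
  obtain ⟨Cx, hCx⟩ := hx (k + 1)
  obtain ⟨C0, hC0⟩ := hx 1
  -- x_n^2 summable and bounded by R
  have hsx2 : Summable (fun n : ℕ => x n ^ 2) := by
    have h := decay_summable x 0 C0 (fun n => hC0 n)
    simpa using h
  have hxb : ∀ n, x n ^ 2 ≤ R := fun n =>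
    le_trans (Summable.le_tsum hsx2 n (fun j _ => sq_nonneg _)) hxR
  have habsx : ∀ n, |x n| ≤ Real.sqrt R := fun n => by
    rw [← Real.sqrt_sq_eq_abs]; exact Real.sqrt_le_sqrt (hxb n)
  -- summability of LHS
  have hsL : Summable (fun n : ℕ => x n ^ 2 * ((n : ℝ) + 1) ^ (2 * k)) :=
    decay_summable x k Cx hCx
  -- bound on g and summability of RHS
  have hg : ∀ n : ℕ, |a n * x n + deriv (f n) (x n)| * ((n : ℝ) + 1) ^ (k + 1) ≤
      M * Cx + B1 * (1 + Real.sqrt R) := by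
    intro n
    set d := deriv (f n) (x n) with hd
    set p : ℝ := ((n : ℝ) + 1) ^ (k + 1) with hp
    have hp0 : 0 ≤ p := by positivity
    have h1 : |a n * x n + d| ≤ M * |x n| + βh n * (1 + |x n|) := by
      have ht : |a n * x n + d| ≤ |a n * x n| + |d| := abs_add_le _ _
      have h2 : |a n * x n| = a n * |x n| := by
        rw [abs_mul, abs_of_pos (lt_of_lt_of_le hα (ha n).1)]
      have h3 : a n * |x n| ≤ M * |x n| :=
        mul_le_mul_of_nonneg_right (ha n).2 (abs_nonneg _)
      have h4 := hderiv n (x n)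
      rw [h2] at ht
      linarith
    have h5 : |a n * x n + d| * p ≤ (M * |x n| + βh n * (1 + |x n|)) * p :=
      mul_le_mul_of_nonneg_right h1 hp0
    have h6 : M * (|x n| * p) ≤ M * Cx :=
      mul_le_mul_of_nonneg_left (hCx n) hM0
    have h7 : βh n * p ≤ B1 := by
      have := hB1 n
      rwa [abs_of_nonneg (hβ0 n)] at this
    have h8 : (βh n * p) * (1 + |x n|) ≤ B1 * (1 + Real.sqrt R) := by
      apply mul_le_mul h7 (by linarith [habsx n]) (by positivity)
      exact le_trans (mul_nonneg (hβ0 n) hp0) h7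
    nlinarith [h5, h6, h8]
  have hsR : Summable (fun n : ℕ =>
      (a n * x n + deriv (f n) (x n)) ^ 2 * ((n : ℝ) + 1) ^ (2 * k)) :=
    decay_summable _ k _ hg
  -- the error-term sequence
  have hhb : ∀ n : ℕ, βh n * (|x n| + x n ^ 2) * ((n : ℝ) + 1) ^ (2 * k) ≤
      (B * (Real.sqrt R + R)) * ((1:ℝ)/((n:ℝ)+1)^2) := by
    intro n
    have e1 : βh n * ((n:ℝ)+1)^(2*k) ≤ B * (1/((n:ℝ)+1)^2) := by
      rw [mul_one_div, le_div_iff₀ (by positivity)]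
      calc βh n * ((n:ℝ)+1)^(2*k) * ((n:ℝ)+1)^2
          = |βh n| * ((n:ℝ)+1)^(2*k+2) := by
            rw [abs_of_nonneg (hβ0 n), mul_assoc, ← pow_add]
        _ ≤ B := hB n
    have e2 : |x n| + x n ^ 2 ≤ Real.sqrt R + R := add_le_add (habsx n) (hxb n)
    have e3 : 0 ≤ |x n| + x n ^ 2 := add_nonneg (abs_nonneg _) (sq_nonneg _)
    have e4 : 0 ≤ B * (1/((n:ℝ)+1)^2) := by positivity
    calc βh n * (|x n| + x n ^ 2) * ((n : ℝ) + 1) ^ (2 * k)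
        = (βh n * ((n:ℝ)+1)^(2*k)) * (|x n| + x n ^ 2) := by ring
      _ ≤ (B * (1/((n:ℝ)+1)^2)) * (Real.sqrt R + R) :=
          mul_le_mul e1 e2 e3 e4
      _ = (B * (Real.sqrt R + R)) * ((1:ℝ)/((n:ℝ)+1)^2) := by ring
  have hsh : Summable (fun n : ℕ => βh n * (|x n| + x n ^ 2) * ((n : ℝ) + 1) ^ (2 * k)) := by
    refine Summable.of_nonneg_of_le (fun n => ?_) hhb (sum_inv_sq.mul_left _)
    exact mul_nonneg (mul_nonneg (hβ0 n)
      (add_nonneg (abs_nonneg _) (sq_nonneg _))) (by positivity)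
  have hth : (∑' n : ℕ, βh n * (|x n| + x n ^ 2) * ((n : ℝ) + 1) ^ (2 * k)) ≤
      B * (Real.sqrt R + R) * T := by
    calc (∑' n : ℕ, βh n * (|x n| + x n ^ 2) * ((n : ℝ) + 1) ^ (2 * k))
        ≤ ∑' n : ℕ, (B * (Real.sqrt R + R)) * ((1:ℝ)/((n:ℝ)+1)^2) :=
          Summable.tsum_le_tsum hhb hsh (sum_inv_sq.mul_left _)
      _ = B * (Real.sqrt R + R) * T := tsum_mul_left
  -- pointwise inequality
  have hpoint : ∀ n : ℕ,
      (α / 2) * (x n ^ 2 * ((n : ℝ) + 1) ^ (2 * k)) ≤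
      (1 / (2 * α)) * ((a n * x n + deriv (f n) (x n)) ^ 2 * ((n : ℝ) + 1) ^ (2 * k)) +
        βh n * (|x n| + x n ^ 2) * ((n : ℝ) + 1) ^ (2 * k) := by
    intro n
    have c := core_ineq α (a n) (x n) (deriv (f n) (x n)) (βh n)
      hα (ha n).1 (hβ0 n) (hderiv n (x n))
    have hpk0 : (0:ℝ) ≤ ((n : ℝ) + 1) ^ (2 * k) := by positivity
    nlinarith [mul_le_mul_of_nonneg_right c hpk0]
  -- sum the pointwise inequality
  have main := Summable.tsum_le_tsum hpoint (hsL.mul_left (α / 2))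
    ((hsR.mul_left (1 / (2 * α))).add hsh)
  rw [tsum_mul_left] at main
  rw [Summable.tsum_add (hsR.mul_left (1 / (2 * α))) hsh, tsum_mul_left] at main
  linarith [main, hth]
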